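/- Let G be a group, A an ordered abelian group, and l : G → A a function satisfying (L1) l(g) ≥ 0 and l(1) = 0, (L2) l(g) = l(g⁻¹), and (L3) for all g,f,h: 2·c(g,f) > 2·c(g,h) implies 2·c(g,h) = 2·c(f,h), where 2·c(g,f) := l(g) + l(f) − l(g⁻¹f). Then for all g, f ∈ G, l(g·f) ≤ l(g) + l(f). -/

import Mathlib

/-- a Lyndon length function (axioms (L1)-(L3), with doubled
Gromov products) is subadditive: `l (g * f) ≤ l g + l f`. -/
theorem lyndon_length_subadditive {G A : Type*} [Group G]
    [AddCommGroup A] [LinearOrder A] [IsOrderedAddMonoid A] (l : G → A)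
    (L1 : ∀ g : G, 0 ≤ l g) (L1' : l 1 = 0)
    (L2 : ∀ g : G, l g = l g⁻¹)
    (L3 : ∀ g f h : G,
      (l g + l f - l (g⁻¹ * f)) > (l g + l h - l (g⁻¹ * h)) →
      (l g + l h - l (g⁻¹ * h)) = (l f + l h - l (f⁻¹ * h))) :
    ∀ g f : G, l (g * f) ≤ l g + l f := by
  have key : ∀ x y : G, 0 ≤ l x + l y - l (x⁻¹ * y) := by
    intro x y
    by_contra hc
    push_neg at hc
    have h1 : l x + l 1 - l (x⁻¹ * 1) = 0 := by
      simp [L1', ← L2]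
    have h2 : l 1 + l y - l (1⁻¹ * y) = 0 := by
      simp [L1']
    have h3 := L3 x 1 y (by rw [h1]; exact hc)
    exact absurd (h3.trans h2) hc.ne
  intro g f
  have h := key g⁻¹ f
  rw [inv_inv, ← L2] at h
  exact sub_nonneg.mp h
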